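/- (Correctness of the friends-of-friends algorithm.) Let P : Fin N → ℝ³ be a finite set of points, b > 0 a linking length, and let G be the linking graph on Fin N in which i and j are adjacent iff i ≠ j and dist (P i) (P j) ≤ b. Let L be any list of pairs of elements of Fin N such that every pair (i, j) with i ≠ j and dist (P i) (P j) ≤ b occurs in L (in either order), and such that every pair occurring in L is adjacent in G. Let H_final be obtained by starting from the identity function and folding the merge operation over L. Then for all i j : Fin N, root H_final i = root H_final j if and only if i and j are joined by a path in G (i.e., i and j lie in the same friends-of-friends feature). In particular the features identified by the algorithm are exactly the connected components of G. -/

import Mathlib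

/-- The root of `i` in the forest `H`: the fixed point of `H` reached by
iterating `H` starting from `i` (for a forest parent function on `Fin N`,
`N` iterations always suffice to reach the fixed point). -/
def root {N : ℕ} (H : Fin N → Fin N) (i : Fin N) : Fin N :=
  H^[N] i

/-- The merge operation for a visited pair `(i, j)`: set the parent of
`root H i` to `root H j` when the two roots differ, do nothing otherwise. -/
def mergeStep {N : ℕ} (H : Fin N → Fin N) (p : Fin N × Fin N) :
    Fin N → Fin N :=
  if root H p.1 = root H p.2 then H
  else Function.update H (root H p.1) (root H p.2)

/-- The friends-of-friends union-find state obtained by starting from the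
identity parent function and folding the merge operation over the list of
visited pairs `L`. -/
def runFOF {N : ℕ} (L : List (Fin N × Fin N)) : Fin N → Fin N :=
  L.foldl mergeStep id

/-- The linking graph of points `P` with linking length `b`: `i` and `j` are
adjacent iff `i ≠ j` and `dist (P i) (P j) ≤ b`. -/
def linkingGraph {N : ℕ} (P : Fin N → EuclideanSpace ℝ (Fin 3)) (b : ℝ) :
    SimpleGraph (Fin N) where
  Adj i j := i ≠ j ∧ dist (P i) (P j) ≤ b
  symm := by
    constructor
    intro i j ⟨hne, hd⟩
    exact ⟨hne.symm, by rwa [dist_comm]⟩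
  loopless := by constructor; intro i ⟨hne, _⟩; exact hne rfl

section Aux

variable {N : ℕ}

def noCycle (H : Fin N → Fin N) : Prop :=
  ∀ (x : Fin N) (k : ℕ), 0 < k → H^[k] x = x → H x = x

lemma noCycle_id : noCycle (id : Fin N → Fin N) := fun _ _ _ _ => rfl

lemma root_spec {H : Fin N → Fin N} (hH : noCycle H) (i : Fin N) :
    ∃ s < N, H^[s] i = root H i ∧ H (root H i) = root H i := by
  obtain ⟨m, m', hne, heq⟩ := Fintype.exists_ne_map_eq_of_card_lt
    (fun m : Fin (N + 1) => H^[(m : ℕ)] i) (by simp)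
  have hvne : (m : ℕ) ≠ (m' : ℕ) := fun h => hne (Fin.ext h)
  obtain ⟨s, t, hst, hts, hst'⟩ :
      ∃ s t : ℕ, s < t ∧ t ≤ N ∧ H^[s] i = H^[t] i := by
    rcases hvne.lt_or_gt with h | h
    · exact ⟨m, m', h, m'.is_le, heq⟩
    · exact ⟨m', m, h, m.is_le, heq.symm⟩
  have hx : H^[t - s] (H^[s] i) = H^[s] i := by
    rw [← Function.iterate_add_apply, Nat.sub_add_cancel hst.le, ← hst']
  have hfix : H (H^[s] i) = H^[s] i := hH _ (t - s) (by omega) hx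
  have key : H^[N - s + s] i = H^[N - s] (H^[s] i) :=
    Function.iterate_add_apply H (N - s) s i
  rw [Nat.sub_add_cancel (by omega)] at key
  have hroot : root H i = H^[s] i := by
    show H^[N] i = H^[s] i
    rw [key, Function.iterate_fixed hfix]
  exact ⟨s, by omega, hroot.symm, by rw [hroot]; exact hfix⟩

lemma root_fixed {H : Fin N → Fin N} (hH : noCycle H) (i : Fin N) :
    H (root H i) = root H i :=
  (root_spec hH i).choose_spec.2.2

lemma iterate_update_of_avoid {H : Fin N → Fin N} {a b x : Fin N} {k : ℕ}
    (h : ∀ m < k, H^[m] x ≠ a) : (Function.update H a b)^[k] x = H^[k] x := by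
  induction k with
  | zero => rfl
  | succ k ih =>
    rw [Function.iterate_succ_apply', Function.iterate_succ_apply',
      ih (fun m hm => h m (by omega)), Function.update_of_ne (h k (by omega))]

lemma iterate_update_of_avoid' {H : Fin N → Fin N} {a b x : Fin N} {k : ℕ}
    (h : ∀ m < k, (Function.update H a b)^[m] x ≠ a) :
    (Function.update H a b)^[k] x = H^[k] x := by
  induction k with
  | zero => rfl
  | succ k ih =>
    have hk : (Function.update H a b)^[k] x = H^[k] x :=
      ih (fun m hm => h m (by omega))
    have hne : H^[k] x ≠ a := hk ▸ h k (by omega)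
    rw [Function.iterate_succ_apply', Function.iterate_succ_apply', hk,
      Function.update_of_ne hne]

lemma avoid_of_root_ne {H : Fin N → Fin N} (hH : noCycle H) {a i : Fin N}
    (ha : H a = a) (h : root H i ≠ a) : ∀ m, H^[m] i ≠ a := by
  have hrf : H (H^[N] i) = H^[N] i := root_fixed hH i
  intro m hm
  apply h
  rcases le_or_gt m N with h1 | h1
  · have key : H^[N - m + m] i = H^[N - m] (H^[m] i) :=
      Function.iterate_add_apply H (N - m) m i
    rw [Nat.sub_add_cancel h1] at key
    show H^[N] i = a
    rw [key, hm, Function.iterate_fixed ha]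
  · have key : H^[m - N + N] i = H^[m - N] (H^[N] i) :=
      Function.iterate_add_apply H (m - N) N i
    rw [Nat.sub_add_cancel h1.le] at key
    rw [key, Function.iterate_fixed hrf] at hm
    exact hm

lemma root_update {H : Fin N → Fin N} (hH : noCycle H) {a b : Fin N}
    (hab : a ≠ b) (ha : H a = a) (hb : H b = b) (i : Fin N) :
    root (Function.update H a b) i = if root H i = a then b else root H i := by
  have hupb : Function.update H a b b = b := by
    rw [Function.update_of_ne (Ne.symm hab), hb]
  by_cases hroot : root H i = a
  · rw [if_pos hroot]
    obtain ⟨s, hsN, hs, -⟩ := root_spec hH i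
    have hex : ∃ m, H^[m] i = a := ⟨s, by rw [hs, hroot]⟩
    have hs'a : H^[Nat.find hex] i = a := Nat.find_spec hex
    have hs'min : ∀ m < Nat.find hex, H^[m] i ≠ a := fun m hm => Nat.find_min hex hm
    have hs'le : Nat.find hex ≤ s := Nat.find_min' hex (by rw [hs, hroot])
    have h1 : (Function.update H a b)^[Nat.find hex] i = a := by
      rw [iterate_update_of_avoid hs'min, hs'a]
    have h2 : (Function.update H a b)^[Nat.find hex + 1] i = b := by
      rw [Function.iterate_succ_apply', h1, Function.update_self]
    have key : (Function.update H a b)^[(N - (Nat.find hex + 1)) + (Nat.find hex + 1)] i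
        = (Function.update H a b)^[N - (Nat.find hex + 1)]
          ((Function.update H a b)^[Nat.find hex + 1] i) :=
      Function.iterate_add_apply _ _ _ i
    rw [Nat.sub_add_cancel (by omega)] at key
    show (Function.update H a b)^[N] i = b
    rw [key, h2, Function.iterate_fixed hupb]
  · rw [if_neg hroot]
    show (Function.update H a b)^[N] i = root H i
    rw [iterate_update_of_avoid (fun m _ => avoid_of_root_ne hH ha hroot m)]
    rfl

lemma noCycle_update {H : Fin N → Fin N} (hH : noCycle H) {a b : Fin N}
    (hab : a ≠ b) (ha : H a = a) (hb : H b = b) :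
    noCycle (Function.update H a b) := by
  intro x k hk hx
  have hupb : Function.update H a b b = b := by
    rw [Function.update_of_ne (Ne.symm hab), hb]
  by_cases hhit : ∃ m < k, (Function.update H a b)^[m] x = a
  · exfalso
    obtain ⟨j, hjk, hj⟩ := hhit
    have h2 : (Function.update H a b)^[j + 1] x = b := by
      rw [Function.iterate_succ_apply', hj, Function.update_self]
    have hA : (Function.update H a b)^[j + k] x = a := by
      rw [Function.iterate_add_apply, hx, hj]
    have hB : (Function.update H a b)^[j + k] x = b := by
      rw [show j + k = (k - 1) + (j + 1) by omega, Function.iterate_add_apply,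
        h2, Function.iterate_fixed hupb]
    exact hab (hA.symm.trans hB)
  · push_neg at hhit
    have hxa : x ≠ a := by
      have := hhit 0 hk
      simpa using this
    rw [iterate_update_of_avoid' hhit] at hx
    rw [Function.update_of_ne hxa]
    exact hH x k hk hx

end Aux

section Merge

variable {N : ℕ}

lemma noCycle_mergeStep {H : Fin N → Fin N} (hH : noCycle H)
    (p : Fin N × Fin N) : noCycle (mergeStep H p) := by
  unfold mergeStep
  split_ifs with h
  · exact hH
  · exact noCycle_update hH h (root_fixed hH p.1) (root_fixed hH p.2)

lemma root_mergeStep {H : Fin N → Fin N} (hH : noCycle H)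
    (p : Fin N × Fin N) (i : Fin N) :
    root (mergeStep H p) i =
      if root H p.1 ≠ root H p.2 ∧ root H i = root H p.1
      then root H p.2 else root H i := by
  unfold mergeStep
  by_cases h : root H p.1 = root H p.2
  · rw [if_pos h, if_neg (fun hc => hc.1 h)]
  · rw [if_neg h, root_update hH h (root_fixed hH p.1) (root_fixed hH p.2)]
    by_cases h1 : root H i = root H p.1
    · rw [if_pos h1, if_pos ⟨h, h1⟩]
    · rw [if_neg h1, if_neg (fun hc => h1 hc.2)]

lemma mergeStep_mono {H : Fin N → Fin N} (hH : noCycle H)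
    (p : Fin N × Fin N) {i j : Fin N} (h : root H i = root H j) :
    root (mergeStep H p) i = root (mergeStep H p) j := by
  rw [root_mergeStep hH, root_mergeStep hH, h]

lemma mergeStep_pair {H : Fin N → Fin N} (hH : noCycle H)
    (p : Fin N × Fin N) :
    root (mergeStep H p) p.1 = root (mergeStep H p) p.2 := by
  rw [root_mergeStep hH, root_mergeStep hH]
  by_cases h : root H p.1 = root H p.2
  · rw [if_neg (by tauto), if_neg (by tauto)]
    exact h
  · rw [if_pos ⟨h, rfl⟩, if_neg (by tauto)]

lemma mergeStep_backward {H : Fin N → Fin N} (hH : noCycle H)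
    (p : Fin N × Fin N) {i j : Fin N}
    (h : root (mergeStep H p) i = root (mergeStep H p) j) :
    root H i = root H j ∨
      (root H i = root H p.1 ∧ root H j = root H p.2) ∨
      (root H i = root H p.2 ∧ root H j = root H p.1) := by
  rw [root_mergeStep hH, root_mergeStep hH] at h
  by_cases h1 : root H p.1 ≠ root H p.2 ∧ root H i = root H p.1 <;>
    by_cases h2 : root H p.1 ≠ root H p.2 ∧ root H j = root H p.1
  · rw [if_pos h1, if_pos h2] at h; exact Or.inl (h1.2.trans h2.2.symm)
  · rw [if_pos h1, if_neg h2] at h; exact Or.inr (Or.inl ⟨h1.2, h.symm⟩)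
  · rw [if_neg h1, if_pos h2] at h; exact Or.inr (Or.inr ⟨h, h2.2⟩)
  · rw [if_neg h1, if_neg h2] at h; exact Or.inl h

lemma fold_noCycle : ∀ (L : List (Fin N × Fin N)) (H : Fin N → Fin N),
    noCycle H → noCycle (L.foldl mergeStep H) := by
  intro L
  induction L with
  | nil => exact fun H hH => hH
  | cons p L ih => exact fun H hH => ih _ (noCycle_mergeStep hH p)

lemma fold_mono : ∀ (L : List (Fin N × Fin N)) (H : Fin N → Fin N),
    noCycle H → ∀ {i j : Fin N}, root H i = root H j →
    root (L.foldl mergeStep H) i = root (L.foldl mergeStep H) j := by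
  intro L
  induction L with
  | nil => intro H _ i j h; exact h
  | cons p L ih =>
    intro H hH i j h
    exact ih _ (noCycle_mergeStep hH p) (mergeStep_mono hH p h)

lemma fold_mem : ∀ (L : List (Fin N × Fin N)) (H : Fin N → Fin N),
    noCycle H → ∀ {p : Fin N × Fin N}, p ∈ L →
    root (L.foldl mergeStep H) p.1 = root (L.foldl mergeStep H) p.2 := by
  intro L
  induction L with
  | nil => intro _ _ _ hp; exact absurd hp List.not_mem_nil
  | cons q L ih =>
    intro H hH p hp
    rcases List.mem_cons.mp hp with h | h
    · subst h
      exact fold_mono L _ (noCycle_mergeStep hH p) (mergeStep_pair hH p)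
    · exact ih _ (noCycle_mergeStep hH q) h

lemma fold_sound {C : Fin N → Fin N → Prop}
    (hsym : ∀ {x y}, C x y → C y x)
    (htr : ∀ {x y z}, C x y → C y z → C x z) :
    ∀ (L : List (Fin N × Fin N)) (H : Fin N → Fin N), noCycle H →
    (∀ p ∈ L, C p.1 p.2) → (∀ i j : Fin N, root H i = root H j → C i j) →
    ∀ i j : Fin N, root (L.foldl mergeStep H) i = root (L.foldl mergeStep H) j →
    C i j := by
  intro L
  induction L with
  | nil => exact fun H _ _ hbase i j h => hbase i j h
  | cons p L ih =>
    intro H hH hedges hbase i j h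
    have hep : C p.1 p.2 := hedges p List.mem_cons_self
    refine ih _ (noCycle_mergeStep hH p)
      (fun q hq => hedges q (List.mem_cons_of_mem _ hq)) ?_ i j h
    intro x y hxy
    rcases mergeStep_backward hH p hxy with h0 | ⟨h1, h2⟩ | ⟨h1, h2⟩
    · exact hbase x y h0
    · exact htr (htr (hbase _ _ h1) hep) (hsym (hbase _ _ h2))
    · exact htr (htr (hbase _ _ h1) (hsym hep)) (hsym (hbase _ _ h2))

end Merge

/-- Correctness of the friends-of-friends algorithm: if the enumerated list
of pairs `L` contains (in some order) every pair of distinct points within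
linking length `b` of each other, and contains only such pairs, then the final
union-find state assigns equal roots to `i` and `j` exactly when `i` and `j`
are joined by a path in the linking graph, i.e. the identified features are
exactly the connected components of the linking graph. -/
theorem fof_correct {N : ℕ} (P : Fin N → EuclideanSpace ℝ (Fin 3)) (b : ℝ)
    (hb : 0 < b) (L : List (Fin N × Fin N))
    (hcover : ∀ i j : Fin N, i ≠ j → dist (P i) (P j) ≤ b →
      ((i, j) ∈ L ∨ (j, i) ∈ L))
    (hadj : ∀ p ∈ L, (linkingGraph P b).Adj p.1 p.2) :
    ∀ i j : Fin N,
      root (runFOF L) i = root (runFOF L) j ↔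
        (linkingGraph P b).Reachable i j := by
  intro i j
  constructor
  · intro h
    exact fold_sound (C := (linkingGraph P b).Reachable)
      (fun hxy => hxy.symm) (fun hxy hyz => hxy.trans hyz)
      L id noCycle_id
      (fun p hp => (hadj p hp).reachable)
      (fun x y hxy => by
        have hxy' : x = y := by simpa [root, Function.iterate_id] using hxy
        exact hxy' ▸ SimpleGraph.Reachable.refl x)
      i j h
  · intro h
    have h' : Relation.ReflTransGen (linkingGraph P b).Adj i j :=
      (SimpleGraph.reachable_iff_reflTransGen _ _).mp h
    clear h
    induction h' with
    | refl => rfl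
    | tail hxy hadj' ih =>
      obtain ⟨hne, hd⟩ := hadj'
      rcases hcover _ _ hne hd with hm | hm
      · exact ih.trans (fold_mem L id noCycle_id hm)
      · exact ih.trans (fold_mem L id noCycle_id hm).symm
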